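/- Let p, q : ℂ → ℂ be complex differentiable at z with q(z) ≠ 0, and let f be the quotient w ↦ p(w)/q(w). Then the desingularized Newton field of f satisfies V_f(z) = −(|p(z)|⁴ + |q(z)|⁴)⁻¹ · ( p(z)·conj(p′(z))·|q(z)|² − q(z)·conj(q′(z))·|p(z)|² ). -/

import Mathlib

open Complex

/-- The desingularized Newton field of `f`. -/
noncomputable def desingNewton (f : ℂ → ℂ) (z : ℂ) : ℂ :=
  -(((1 + ‖f z‖ ^ 4 : ℝ) : ℂ))⁻¹ * (starRingEnd ℂ) (deriv f z) * f z

/-- For `f = p/q` with `q z ≠ 0`, the desingularized Newton field equals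
`-(|p|⁴+|q|⁴)⁻¹ (p·conj(p')·|q|² - q·conj(q')·|p|²)`. -/
theorem desingNewton_quotient_formula
    (p q : ℂ → ℂ) (z : ℂ)
    (hp : DifferentiableAt ℂ p z) (hq : DifferentiableAt ℂ q z) (hqz : q z ≠ 0) :
    desingNewton (fun w => p w / q w) z =
      -(((‖p z‖ ^ 4 + ‖q z‖ ^ 4 : ℝ) : ℂ))⁻¹ *
        (p z * (starRingEnd ℂ) (deriv p z) * ((‖q z‖ ^ 2 : ℝ) : ℂ) -
         q z * (starRingEnd ℂ) (deriv q z) * ((‖p z‖ ^ 2 : ℝ) : ℂ)) := by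
  have hderiv : deriv (fun w => p w / q w) z =
      (deriv p z * q z - p z * deriv q z) / q z ^ 2 := deriv_div hp hq hqz
  have habs : ∀ w : ℂ, ((‖w‖ ^ 2 : ℝ) : ℂ) = w * (starRingEnd ℂ) w := by
    intro w
    rw [Complex.sq_norm]
    exact (Complex.mul_conj w).symm
  have habs4 : ∀ w : ℂ, ((‖w‖ ^ 4 : ℝ) : ℂ) = (w * (starRingEnd ℂ) w) ^ 2 := by
    intro w
    have : (‖w‖ ^ 4 : ℝ) = (‖w‖ ^ 2) ^ 2 := by ring
    rw [this, Complex.ofReal_pow, habs]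
  have hq4 : ‖p z / q z‖ ^ 4 = ‖p z‖ ^ 4 / ‖q z‖ ^ 4 := by
    rw [norm_div]; rw [div_pow]
  have hcz : (starRingEnd ℂ) (q z) ≠ 0 := by simpa using hqz
  have hqa : ‖q z‖ ≠ 0 := by simpa using hqz
  have hsum : ((‖p z‖ ^ 4 + ‖q z‖ ^ 4 : ℝ) : ℂ) ≠ 0 := by
    have : (0:ℝ) < ‖p z‖ ^ 4 + ‖q z‖ ^ 4 := by
      have := pow_pos (norm_pos_iff.mpr hqz) 4
      positivity
    exact_mod_cast this.ne'
  simp only [desingNewton, hderiv]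
  rw [show ((1 + ‖(fun w => p w / q w) z‖ ^ 4 : ℝ) : ℂ) =
      ((‖p z‖ ^ 4 + ‖q z‖ ^ 4 : ℝ) : ℂ) /
        ((‖q z‖ ^ 4 : ℝ) : ℂ) by
    have h' : ‖(fun w => p w / q w) z‖ ^ 4 =
        ‖p z‖ ^ 4 / ‖q z‖ ^ 4 := by simpa using hq4
    rw [h']
    push_cast
    have hb : (‖q z‖ : ℂ) ≠ 0 := by exact_mod_cast hqa
    field_simp [hb]
    ring]
  set S : ℂ := ((‖p z‖ ^ 4 + ‖q z‖ ^ 4 : ℝ) : ℂ) with hS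
  rw [habs4 (q z)]
  simp only [habs, map_div₀, map_sub, map_mul, map_pow]
  field_simp
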